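/- Let R be a commutative ring and X a subset of Idl(R), with the coarse lower topology, such that every maximal ideal of R belongs to X. Then X is quasi-compact. -/

import Mathlib

/-- The coarse lower topology on the set of ideals of a commutative ring. -/
def coarseLowerTopology (R : Type*) [CommRing R] : TopologicalSpace (Ideal R) :=
  TopologicalSpace.generateFrom {U : Set (Ideal R) | ∃ a : Ideal R, U = {i : Ideal R | a ≤ i}ᶜ}

/-- If a set of ideals contains all maximal ideals, it is quasi-compact in the
coarse lower topology. -/
theorem isCompact_of_max_subset {R : Type*} [CommRing R] (X : Set (Ideal R))
    (hX : ∀ m : Ideal R, m.IsMaximal → m ∈ X) :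
    letI := coarseLowerTopology R
    IsCompact X := by
  letI := coarseLowerTopology R
  rw [isCompact_iff_ultrafilter_le_nhds]
  intro f hf
  set J : Set (Ideal R) := {a | {j : Ideal R | a ≤ j} ∈ f} with hJ
  have hbot : (⊥ : Ideal R) ∈ J := by
    simp only [hJ, Set.mem_setOf_eq, bot_le, Set.setOf_true]
    exact Filter.univ_mem
  have hdir : DirectedOn (· ≤ ·) J := by
    rintro a ha b hb
    refine ⟨a ⊔ b, ?_, le_sup_left, le_sup_right⟩
    have : {j : Ideal R | a ≤ j} ∩ {j : Ideal R | b ≤ j} ⊆ {j : Ideal R | a ⊔ b ≤ j} := by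
      rintro j ⟨h1, h2⟩; exact sup_le (show a ≤ j from h1) (show b ≤ j from h2)
    exact Filter.mem_of_superset (Filter.inter_mem ha hb) this
  have key : ∀ m : Ideal R, m ∈ X → (∀ a ∈ J, a ≤ m) → ∃ i ∈ X, ↑f ≤ @nhds _ (coarseLowerTopology R) i := by
    intro m hmX hm
    refine ⟨m, hmX, ?_⟩
    rw [coarseLowerTopology, TopologicalSpace.nhds_generateFrom]
    refine le_iInf₂ ?_
    rintro s ⟨hms, a, rfl⟩
    rw [Filter.le_principal_iff]
    by_contra h
    have : {i : Ideal R | a ≤ i} ∈ f := by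
      have := (Ultrafilter.compl_mem_iff_notMem).mpr h
      rwa [compl_compl] at this
    exact hms (hm a this)
  by_cases htop : sSup J = ⊤
  · -- ⊤ is a compact element, so ⊤ ∈ J, i.e. {⊤} ∈ f
    have hcomp : IsCompactElement (⊤ : Ideal R) := by
      have := Submodule.singleton_span_isCompactElement (R := R) (1 : R)
      rwa [show Submodule.span R {(1:R)} = (⊤ : Ideal R) from Ideal.span_singleton_one] at this
    rw [CompleteLattice.isCompactElement_iff_le_of_directed_sSup_le] at hcomp
    obtain ⟨a, haJ, hta⟩ := hcomp J ⟨⊥, hbot⟩ hdir (le_of_eq htop.symm)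
    have ha : a = ⊤ := top_le_iff.mp hta
    subst ha
    have hmem : {j : Ideal R | (⊤ : Ideal R) ≤ j} ∈ f := haJ
    have : (X ∩ {j : Ideal R | (⊤ : Ideal R) ≤ j}).Nonempty :=
      Filter.nonempty_of_mem (Filter.inter_mem (Filter.le_principal_iff.mp hf) hmem)
    obtain ⟨i, hiX, hi⟩ := this
    have hi' : i = ⊤ := top_le_iff.mp hi
    subst hi'
    refine key ⊤ hiX ?_
    intro a _; exact le_top
  · obtain ⟨m, hmmax, hlem⟩ := Ideal.exists_le_maximal _ htop
    exact key m (hX m hmmax) fun a ha => le_trans (le_sSup ha) hlem
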